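/- Fix s > 0. For all natural numbers n, m, the Hermite polynomials h_{n,s} and h_{m,s} are orthogonal in L² of the variance-s Gaussian with norm given by ∫ (Polynomial.eval x h_{n,s}) * (Polynomial.eval x h_{m,s}) d(gaussianReal 0 s)(x) = if n = m then n! * s^n else 0. -/

import Mathlib

open MeasureTheory ProbabilityTheory Polynomial

/-- The Hermite polynomial `h_{n,s} = e^{-sΔ/2}(X^n)`, the backward heat operator applied
to the monomial `X^n`. -/
noncomputable def hermitePoly (s : ℝ) (n : ℕ) : Polynomial ℝ :=
  ∑ k ∈ Finset.range (n / 2 + 1),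
    ((-s / 2) ^ k / (k.factorial : ℝ)) • (⇑(derivative (R := ℝ)))^[2 * k] (X ^ n)

namespace HermiteOrthAux

open Real Filter Topology

variable {s : ℝ}


lemma iter_deriv_add (k : ℕ) (p q : Polynomial ℝ) :
    (⇑(derivative (R := ℝ)))^[k] (p + q) =
      (⇑(derivative (R := ℝ)))^[k] p + (⇑(derivative (R := ℝ)))^[k] q := by
  simp_rw [← Module.End.pow_apply, map_add]

lemma iter_deriv_X_mul (m : ℕ) (q : Polynomial ℝ) :
    (⇑(derivative (R := ℝ)))^[m] (X * q) =
      X * (⇑(derivative (R := ℝ)))^[m] q + m • (⇑(derivative (R := ℝ)))^[m - 1] q := by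
  induction m generalizing q with
  | zero => simp
  | succ m ih =>
    rw [Function.iterate_succ_apply, derivative_mul, derivative_X, one_mul, iter_deriv_add,
      ih (derivative q)]
    cases m with
    | zero => simp [← Function.iterate_succ_apply, add_comm]
    | succ k =>
      have h1 : (⇑(derivative (R := ℝ)))^[k+1] (derivative q)
          = (⇑(derivative (R := ℝ)))^[k+2] q := (Function.iterate_succ_apply _ _ _).symm
      have h2 : (⇑(derivative (R := ℝ)))^[k] (derivative q)
          = (⇑(derivative (R := ℝ)))^[k+1] q := (Function.iterate_succ_apply _ _ _).symm
      have h3 : (⇑(derivative (R := ℝ)))^[k+1] (derivative q)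
          = (⇑(derivative (R := ℝ)))^[k+1+1] q := (Function.iterate_succ_apply _ _ _).symm
      simp only [Nat.succ_sub_one, h2, h3]
      rw [succ_nsmul]
      ring

lemma hermitePoly_eq_sum (s : ℝ) (n N : ℕ) (hN : n / 2 + 1 ≤ N) :
    hermitePoly s n = ∑ k ∈ Finset.range N,
      ((-s / 2) ^ k / (k.factorial : ℝ)) • (⇑(derivative (R := ℝ)))^[2 * k] (X ^ n) := by
  rw [hermitePoly]
  refine Finset.sum_subset (Finset.range_subset_range.2 hN) fun k _ hk => ?_
  have hnk : (X ^ n : Polynomial ℝ).natDegree < 2 * k := by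
    rw [natDegree_X_pow]
    simp only [Finset.mem_range, not_lt] at hk
    omega
  rw [iterate_derivative_eq_zero hnk, smul_zero]

lemma derivative_hermitePoly (s : ℝ) (n : ℕ) :
    derivative (hermitePoly s (n + 1)) = ((n : ℝ) + 1) • hermitePoly s n := by
  rw [hermitePoly_eq_sum s (n+1) (n+2) (by omega), hermitePoly_eq_sum s n (n+2) (by omega),
    derivative_sum, Finset.smul_sum]
  refine Finset.sum_congr rfl fun k _ => ?_
  rw [derivative_smul]
  rw [smul_comm]
  congr 1
  have : derivative ((⇑(derivative (R := ℝ)))^[2*k] (X ^ (n+1)))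
      = (⇑(derivative (R := ℝ)))^[2*k] (derivative (X ^ (n+1))) := by
    rw [← Function.iterate_succ_apply' (⇑(derivative (R := ℝ))) (2*k) (X ^ (n+1)),
      Function.iterate_succ_apply]
  rw [this, derivative_X_pow, add_tsub_cancel_right, iterate_derivative_C_mul,
    ← smul_eq_C_mul]
  push_cast
  rfl

lemma hermitePoly_succ (s : ℝ) (n : ℕ) :
    hermitePoly s (n + 1) = X * hermitePoly s n - s • derivative (hermitePoly s n) := by
  rw [hermitePoly_eq_sum s (n+1) (n+2) (by omega), hermitePoly_eq_sum s n (n+2) (by omega),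
    derivative_sum]
  have expand : ∀ k ∈ Finset.range (n+2),
      ((-s / 2) ^ k / (k.factorial : ℝ)) • (⇑(derivative (R := ℝ)))^[2 * k] (X ^ (n+1))
      = X * (((-s / 2) ^ k / (k.factorial : ℝ)) • (⇑(derivative (R := ℝ)))^[2 * k] (X ^ n))
        + ((2 * k : ℝ) * ((-s / 2) ^ k / (k.factorial : ℝ))) •
            (⇑(derivative (R := ℝ)))^[2 * k - 1] (X ^ n) := by
    intro k _
    have : (X : Polynomial ℝ) ^ (n+1) = X * X ^ n := by ring
    rw [this, iter_deriv_X_mul, smul_add, mul_smul_comm]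
    congr 1
    rw [← Nat.cast_smul_eq_nsmul ℝ, smul_smul]
    congr 1
    push_cast
    ring
  rw [Finset.sum_congr rfl expand, Finset.sum_add_distrib, sub_eq_add_neg]
  congr 1
  · rw [Finset.mul_sum]
  · -- second sum equals -(s • derivative sum)
    rw [Finset.sum_range_succ' _ (n+1)]
    conv_rhs => rw [Finset.sum_range_succ]
    have htop : derivative (((-s / 2) ^ (n+1) / ((n+1).factorial : ℝ)) •
        (⇑(derivative (R := ℝ)))^[2 * (n+1)] (X ^ n)) = 0 := by
      rw [iterate_derivative_eq_zero (by rw [natDegree_X_pow]; omega), smul_zero,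
        derivative_zero]
    rw [htop, add_zero]
    simp only [Nat.mul_zero, Nat.cast_zero, zero_mul, zero_smul, add_zero, mul_zero]
    rw [Finset.smul_sum, ← Finset.sum_neg_distrib]
    refine Finset.sum_congr rfl fun j _ => ?_
    rw [derivative_smul]
    have hD : derivative ((⇑(derivative (R := ℝ)))^[2*j] (X ^ n))
        = (⇑(derivative (R := ℝ)))^[2 * (j+1) - 1] (X ^ n) := by
      have h2 : 2 * (j+1) - 1 = 2*j + 1 := by omega
      rw [h2, ← Function.iterate_succ_apply' (⇑(derivative (R := ℝ))) (2*j) (X ^ n)]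
    rw [hD, smul_smul, ← neg_smul]
    congr 1
    have hfac : ((j+1).factorial : ℝ) = (j+1) * (j.factorial : ℝ) := by
      rw [Nat.factorial_succ]; push_cast; ring
    have hj : (j.factorial : ℝ) ≠ 0 := Nat.cast_ne_zero.2 j.factorial_ne_zero
    rw [hfac]
    push_cast
    field_simp
    ring



variable {s : ℝ}

lemma exp_eq (s : ℝ) (x : ℝ) : rexp (-x ^ 2 / (2 * s)) = rexp (-(2 * s)⁻¹ * x ^ 2) := by
  congr 1; ring

lemma integrable_pow_mul (hs : 0 < s) (n : ℕ) :
    Integrable (fun x : ℝ => x ^ n * rexp (-x ^ 2 / (2 * s))) := by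
  have hb : 0 < (2 * s)⁻¹ := by positivity
  have h := integrable_rpow_mul_exp_neg_mul_sq hb
    (s := (n : ℝ)) (lt_of_lt_of_le neg_one_lt_zero (Nat.cast_nonneg n))
  simp only [Real.rpow_natCast] at h
  refine h.congr ?_
  filter_upwards with x
  rw [exp_eq]

lemma integrable_poly_mul (hs : 0 < s) (p : Polynomial ℝ) :
    Integrable (fun x : ℝ => p.eval x * rexp (-x ^ 2 / (2 * s))) := by
  have : (fun x : ℝ => p.eval x * rexp (-x ^ 2 / (2 * s)))
      = fun x => ∑ i ∈ Finset.range (p.natDegree + 1),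
          p.coeff i * (x ^ i * rexp (-x ^ 2 / (2 * s))) := by
    funext x
    rw [eval_eq_sum_range, Finset.sum_mul]
    simp_rw [mul_assoc]
  rw [this]
  exact integrable_finset_sum _ fun i _ => ((integrable_pow_mul hs i).const_mul _)

lemma tendsto_poly_mul (hs : 0 < s) (p : Polynomial ℝ) :
    Tendsto (fun x : ℝ => p.eval x * rexp (-x ^ 2 / (2 * s))) (Filter.cocompact ℝ) (𝓝 0) := by
  have hb : 0 < (2 * s)⁻¹ := by positivity
  have hg : Tendsto (fun x : ℝ => ∑ i ∈ Finset.range (p.natDegree + 1),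
      |p.coeff i| * (|x| ^ i * rexp (-x ^ 2 / (2 * s)))) (Filter.cocompact ℝ) (𝓝 0) := by
    have : (0 : ℝ) = ∑ i ∈ Finset.range (p.natDegree + 1), |p.coeff i| * 0 := by simp
    rw [this]
    refine tendsto_finset_sum _ fun i _ => Tendsto.const_mul _ ?_
    have h := tendsto_rpow_abs_mul_exp_neg_mul_sq_cocompact hb (i : ℝ)
    simp only [Real.rpow_natCast] at h
    refine h.congr fun x => ?_
    rw [exp_eq]
  refine squeeze_zero_norm (fun x => ?_) hg
  rw [norm_mul, norm_of_nonneg (exp_pos _).le]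
  have : ‖p.eval x‖ ≤ ∑ i ∈ Finset.range (p.natDegree + 1), |p.coeff i| * |x| ^ i := by
    rw [eval_eq_sum_range]
    refine (norm_sum_le _ _).trans (Finset.sum_le_sum fun i _ => ?_)
    rw [norm_mul, norm_pow]
    rfl
  calc ‖p.eval x‖ * rexp (-x ^ 2 / (2 * s))
      ≤ (∑ i ∈ Finset.range (p.natDegree + 1), |p.coeff i| * |x| ^ i) *
          rexp (-x ^ 2 / (2 * s)) := by
        exact mul_le_mul_of_nonneg_right this (exp_pos _).le
    _ = _ := by rw [Finset.sum_mul]; exact Finset.sum_congr rfl fun i _ => by ring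

lemma ibp (hs : 0 < s) (p : Polynomial ℝ) :
    ∫ x : ℝ, (X * p : Polynomial ℝ).eval x * rexp (-x ^ 2 / (2 * s))
      = s * ∫ x : ℝ, (derivative p).eval x * rexp (-x ^ 2 / (2 * s)) := by
  have hs' : s ≠ 0 := hs.ne'
  set F : ℝ → ℝ := fun x => -s * (p.eval x * rexp (-x ^ 2 / (2 * s))) with hFdef
  set f' : ℝ → ℝ := fun x => (X * p : Polynomial ℝ).eval x * rexp (-x ^ 2 / (2 * s))
      - s * ((derivative p).eval x * rexp (-x ^ 2 / (2 * s))) with hf'def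
  have hF : ∀ x : ℝ, HasDerivAt F (f' x) x := by
    intro x
    have h1 : HasDerivAt (fun y : ℝ => p.eval y) ((derivative p).eval x) x := p.hasDerivAt x
    have h2 : HasDerivAt (fun y : ℝ => -y ^ 2 / (2 * s)) (-(2 * x ^ (2-1)) / (2 * s)) x :=
      ((hasDerivAt_pow 2 x).neg).div_const (2 * s)
    have h3 := h2.exp
    have h4 : HasDerivAt F _ x := (h1.mul h3).const_mul (-s)
    convert h4 using 1
    simp only [hf'def, eval_mul, eval_X, pow_one]
    field_simp
    ring
  have hint : Integrable f' :=
    (integrable_poly_mul hs (X * p)).sub ((integrable_poly_mul hs (derivative p)).const_mul s)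
  have hco : Tendsto F (Filter.cocompact ℝ) (𝓝 0) := by
    have h := (tendsto_poly_mul hs p).const_mul (-s)
    rw [mul_zero] at h
    exact h
  have hle : Filter.atBot ⊔ Filter.atTop ≤ Filter.cocompact ℝ := cocompact_eq_atBot_atTop.ge
  have htop : Tendsto F Filter.atTop (𝓝 0) :=
    hco.mono_left (le_sup_right.trans hle)
  have hbot : Tendsto F Filter.atBot (𝓝 0) :=
    hco.mono_left (le_sup_left.trans hle)
  have hIoi : ∫ x in Set.Ioi (0:ℝ), f' x = 0 - F 0 :=
    integral_Ioi_of_hasDerivAt_of_tendsto' (fun x _ => hF x) hint.integrableOn htop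
  have hIic : ∫ x in Set.Iic (0:ℝ), f' x = F 0 - 0 :=
    integral_Iic_of_hasDerivAt_of_tendsto' (fun x _ => hF x) hint.integrableOn hbot
  have key : ∫ x : ℝ, f' x = 0 := by
    rw [← intervalIntegral.integral_Iic_add_Ioi hint.integrableOn hint.integrableOn, hIoi, hIic]
    ring
  rw [hf'def] at key
  rw [integral_sub (integrable_poly_mul hs (X * p))
    ((integrable_poly_mul hs (derivative p)).const_mul s), integral_const_mul] at key
  linarith


noncomputable def J (s : ℝ) (p : Polynomial ℝ) : ℝ :=
  ∫ x : ℝ, p.eval x * rexp (-x ^ 2 / (2 * s))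

lemma J_smul (s c : ℝ) (p : Polynomial ℝ) : J s (c • p) = c * J s p := by
  unfold J
  simp_rw [eval_smul, smul_eq_mul, mul_assoc]
  rw [integral_const_mul]

lemma J_sub (hs : 0 < s) (p q : Polynomial ℝ) : J s (p - q) = J s p - J s q := by
  unfold J
  simp_rw [eval_sub, sub_mul]
  exact integral_sub (integrable_poly_mul hs p) (integrable_poly_mul hs q)

lemma J_add (hs : 0 < s) (p q : Polynomial ℝ) : J s (p + q) = J s p + J s q := by
  unfold J
  simp_rw [eval_add, add_mul]
  exact integral_add (integrable_poly_mul hs p) (integrable_poly_mul hs q)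

lemma J_X_mul (hs : 0 < s) (p : Polynomial ℝ) : J s (X * p) = s * J s (derivative p) :=
  ibp hs p

lemma hermitePoly_zero (s : ℝ) : hermitePoly s 0 = 1 := by
  simp [hermitePoly]

lemma J_one (hs : 0 < s) : J s 1 = Real.sqrt (2 * π * s) := by
  unfold J
  simp only [eval_one, one_mul]
  simp_rw [exp_eq s]
  rw [integral_gaussian]
  congr 1
  rw [div_eq_mul_inv, inv_inv]
  ring

lemma J_hermite (hs : 0 < s) (m : ℕ) :
    J s (hermitePoly s m) = if m = 0 then Real.sqrt (2 * π * s) else 0 := by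
  cases m with
  | zero => simpa [hermitePoly_zero] using J_one hs
  | succ m =>
    rw [hermitePoly_succ, J_sub hs, J_X_mul hs, J_smul]
    simp

lemma J_hermite_mul (hs : 0 < s) : ∀ n m : ℕ,
    J s (hermitePoly s n * hermitePoly s m)
      = (if n = m then (n.factorial : ℝ) * s ^ n else 0) * Real.sqrt (2 * π * s) := by
  intro n
  induction n with
  | zero =>
    intro m
    rw [hermitePoly_zero, one_mul, J_hermite hs]
    rcases eq_or_ne m 0 with rfl | hm
    · simp
    · simp [hm, Ne.symm hm]
  | succ n ih =>
    intro m
    cases m with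
    | zero =>
      rw [hermitePoly_zero, mul_one, J_hermite hs]
      simp
    | succ q =>
      have step : J s (hermitePoly s (n+1) * hermitePoly s (q+1))
          = s * ((q : ℝ) + 1) * J s (hermitePoly s n * hermitePoly s q) := by
        rw [hermitePoly_succ s n, sub_mul, smul_mul_assoc, J_sub hs, J_smul, mul_assoc,
          J_X_mul hs, derivative_mul, J_add hs, derivative_hermitePoly s q,
          mul_smul_comm, J_smul]
        ring
      rw [step, ih q]
      rcases eq_or_ne n q with rfl | hnq
      · simp only [if_pos rfl]
        rw [Nat.factorial_succ]
        push_cast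
        ring
      · have : n + 1 ≠ q + 1 := fun h => hnq (Nat.succ_injective h)
        simp [hnq, this]

end HermiteOrthAux

/-- The Hermite polynomials are orthogonal in `L²` of the variance-`s` Gaussian, with
`‖h_{n,s}‖² = n! sⁿ`. -/
theorem hermitePoly_orthogonal (s : ℝ) (hs : 0 < s) (n m : ℕ) :
    ∫ x, Polynomial.eval x (hermitePoly s n) * Polynomial.eval x (hermitePoly s m)
        ∂(gaussianReal 0 s.toNNReal) =
      if n = m then (n.factorial : ℝ) * s ^ n else 0 := by
  open HermiteOrthAux Real in
  have hv : s.toNNReal ≠ 0 := (Real.toNNReal_pos.2 hs).ne'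
  have hsqrt : Real.sqrt (2 * Real.pi * s) ≠ 0 := by
    refine ne_of_gt (Real.sqrt_pos.2 (by positivity))
  rw [gaussianReal_of_var_ne_zero 0 hv]
  have hmeas : Measurable fun x => (gaussianPDFReal 0 s.toNNReal x).toNNReal :=
    (measurable_gaussianPDFReal 0 _).real_toNNReal
  have hwd : (volume : Measure ℝ).withDensity (gaussianPDF 0 s.toNNReal)
      = (volume : Measure ℝ).withDensity
          (fun x => ((gaussianPDFReal 0 s.toNNReal x).toNNReal : ENNReal)) := rfl
  rw [hwd, integral_withDensity_eq_integral_smul hmeas]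
  have hint : ∀ x : ℝ, (gaussianPDFReal 0 s.toNNReal x).toNNReal •
        (Polynomial.eval x (hermitePoly s n) * Polynomial.eval x (hermitePoly s m))
      = (Real.sqrt (2 * Real.pi * s))⁻¹ *
          ((hermitePoly s n * hermitePoly s m).eval x * rexp (-x ^ 2 / (2 * s))) := by
    intro x
    rw [NNReal.smul_def, Real.coe_toNNReal _ (gaussianPDFReal_nonneg 0 _ x)]
    rw [gaussianPDFReal, Real.coe_toNNReal s hs.le, eval_mul, sub_zero, smul_eq_mul]
    ring
  simp_rw [hint]
  rw [integral_const_mul]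
  have := HermiteOrthAux.J_hermite_mul hs n m
  rw [HermiteOrthAux.J] at this
  rw [this]
  field_simp
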